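/- arXiv:2009.06229 — 2 statements merged into one kernel-verified Lean document; each statement's English description precedes it below -/
import Mathlib

section
/- Let x : ℕ → ℝ be a real sequence (indexed from 1). The series Σ_{i=1}^∞ x_i converges to a finite limit if and only if there exists a nonnegative sequence (c_j)_{j≥1} with c_j → 0 such that for every sequence of block sizes n : ℕ → ℕ with n_j ≥ 1 for all j, the posterior means m_k = (Σ_{j=1}^k 1/j² + Σ_{j=1}^k y_j)/(k + 2 Σ_{j=1}^k 1/j²) converge to 1 as k → ∞, where y_j = 1 if |S_j| ≤ c_j and y_j = 0 otherwise, and S_j is the j-th block sum determined by the block sizes n. -/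
open Filter Finset

/-- Cumulative block endpoints: `N n j = n 1 + ⋯ + n j`, with `N n 0 = 0`. -/
noncomputable def blockEnd (n : ℕ → ℕ) (j : ℕ) : ℕ := ∑ k ∈ Finset.Icc 1 j, n k

/-- The `j`-th block sum `S j = ∑_{i = N_{j-1}+1}^{N_j} x i`. -/
noncomputable def blockSum (x : ℕ → ℝ) (n : ℕ → ℕ) (j : ℕ) : ℝ :=
  ∑ i ∈ Finset.Ioc (blockEnd n (j - 1)) (blockEnd n j), x i

/-- `y j = 1` if `|S j| ≤ c j` and `y j = 0` otherwise. -/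
noncomputable def indicatorY (x : ℕ → ℝ) (n : ℕ → ℕ) (c : ℕ → ℝ) (j : ℕ) : ℝ :=
  if |blockSum x n j| ≤ c j then 1 else 0

/-- Stage-`k` posterior mean
`m k = (∑_{j=1}^k 1/j² + ∑_{j=1}^k y j) / (k + 2 ∑_{j=1}^k 1/j²)`. -/
noncomputable def postMean (x : ℕ → ℝ) (n : ℕ → ℕ) (c : ℕ → ℝ) (k : ℕ) : ℝ :=
  (∑ j ∈ Finset.Icc 1 k, (1 : ℝ) / (j : ℝ) ^ 2 + ∑ j ∈ Finset.Icc 1 k, indicatorY x n c j) /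
    ((k : ℝ) + 2 * ∑ j ∈ Finset.Icc 1 k, (1 : ℝ) / (j : ℝ) ^ 2)

lemma blockEnd_zero (n : ℕ → ℕ) : blockEnd n 0 = 0 := by simp [blockEnd]

lemma blockEnd_succ (n : ℕ → ℕ) (j : ℕ) : blockEnd n (j + 1) = blockEnd n j + n (j + 1) := by
  simp [blockEnd, Finset.sum_Icc_succ_top (Nat.one_le_iff_ne_zero.2 (Nat.succ_ne_zero j))]

lemma blockEnd_mono (n : ℕ → ℕ) {a b : ℕ} (h : a ≤ b) : blockEnd n a ≤ blockEnd n b :=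
  Finset.sum_le_sum_of_subset (Finset.Icc_subset_Icc_right h)

lemma le_blockEnd (n : ℕ → ℕ) (hn : ∀ j, 1 ≤ n j) (j : ℕ) : j ≤ blockEnd n j := by
  calc j = ∑ k ∈ Finset.Icc 1 j, 1 := by simp
  _ ≤ blockEnd n j := Finset.sum_le_sum fun i _ => hn i

lemma partial_Ioc (x : ℕ → ℝ) (m : ℕ) :
    ∑ i ∈ Finset.Icc 1 m, x i = ∑ i ∈ Finset.Ioc 0 m, x i := by
  rw [← Finset.Icc_add_one_left_eq_Ioc, zero_add]

lemma sub_partial (x : ℕ → ℝ) {p q : ℕ} (h : p ≤ q) :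
    (∑ i ∈ Finset.Icc 1 q, x i) - (∑ i ∈ Finset.Icc 1 p, x i) = ∑ i ∈ Finset.Ioc p q, x i := by
  rw [partial_Ioc, partial_Ioc, ← Finset.sum_Ioc_consecutive x (Nat.zero_le p) h]; ring

lemma basel_bound : ∀ k : ℕ, 1 ≤ k → ∑ j ∈ Finset.Icc 1 k, (1 : ℝ) / (j : ℝ) ^ 2 ≤ 2 - 1 / k := by
  intro k
  induction k with
  | zero => omega
  | succ m ih =>
    intro _
    rcases Nat.eq_zero_or_pos m with hm | hm
    · subst hm; norm_num
    · rw [Finset.sum_Icc_succ_top (by omega : 1 ≤ m + 1)]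
      have h1 := ih hm
      have hmr : (1 : ℝ) ≤ (m : ℝ) := by exact_mod_cast hm
      have hm0 : (0:ℝ) < (m:ℝ) := by exact_mod_cast hm
      have h2 : (1 : ℝ) / ((m : ℝ) + 1) ^ 2 ≤ 1 / m - 1 / (m + 1) := by
        have e1 : (1:ℝ) / m - 1 / (m + 1) = 1 / ((m:ℝ) * (m + 1)) := by
          field_simp
          ring
        rw [e1]
        apply one_div_le_one_div_of_le (by positivity)
        nlinarith
      push_cast
      linarith

lemma basel_nonneg (k : ℕ) : 0 ≤ ∑ j ∈ Finset.Icc 1 k, (1 : ℝ) / (j : ℝ) ^ 2 :=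
  Finset.sum_nonneg fun i _ => by positivity

lemma basel_le_two (k : ℕ) : ∑ j ∈ Finset.Icc 1 k, (1 : ℝ) / (j : ℝ) ^ 2 ≤ 2 := by
  rcases Nat.eq_zero_or_pos k with h | h
  · subst h; simp
  · have := basel_bound k h
    have : (0:ℝ) < k := by exact_mod_cast h
    have h2 : (0:ℝ) ≤ 1 / k := by positivity
    linarith [basel_bound k h]

lemma odd_card (k : ℕ) : ((Finset.Icc 1 k).filter (fun j => ¬ Even j)).card ≤ (k + 1) / 2 := by
  induction k with
  | zero => simp
  | succ m ih =>
    rw [← Finset.insert_Icc_right_eq_Icc_add_one (by omega), Finset.filter_insert]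
    by_cases h : Even (m + 1)
    · simp only [h, not_true_eq_false, if_false]
      omega
    · simp only [h, not_false_eq_true, if_true]
      rw [Finset.card_insert_of_notMem (by simp)]
      have hm2 : ¬ (m+1) % 2 = 0 := by rwa [Nat.even_iff] at h
      omega


lemma forward_dir (x : ℕ → ℝ) (L : ℝ)
    (hL : Tendsto (fun m => ∑ i ∈ Finset.Icc 1 m, x i) atTop (nhds L)) :
    ∃ c : ℕ → ℝ, (∀ j, 0 ≤ c j) ∧ Tendsto c atTop (nhds 0) ∧
      ∀ n : ℕ → ℕ, (∀ j, 1 ≤ n j) →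
        Tendsto (fun k => postMean x n c k) atTop (nhds 1) := by
  set T : ℕ → ℝ := fun m => ∑ i ∈ Finset.Icc 1 m, x i with hT
  have hten : ∀ i : ℕ, Tendsto (fun m => |T (m + i) - L|) atTop (nhds 0) := by
    intro i
    have h1 : Tendsto (fun m : ℕ => T (m + i)) atTop (nhds L) :=
      hL.comp (tendsto_add_atTop_nat i)
    have := (h1.sub_const L).abs
    simpa using this
  have hbdd : ∀ i : ℕ, BddAbove (Set.range fun m : ℕ => |T (m + i) - L|) :=
    fun i => (hten i).bddAbove_range
  set d : ℕ → ℝ := fun i => ⨆ m : ℕ, |T (m + i) - L| with hd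
  have hd_le : ∀ i N : ℕ, i ≤ N → |T N - L| ≤ d i := by
    intro i N h
    have := le_ciSup (hbdd i) (N - i)
    simpa [Nat.sub_add_cancel h] using this
  have hd_nonneg : ∀ i, 0 ≤ d i := fun i =>
    le_trans (abs_nonneg _) (le_ciSup (hbdd i) 0)
  have hd_to : Tendsto d atTop (nhds 0) := by
    rw [Metric.tendsto_atTop]
    intro ε hε
    obtain ⟨M, hM⟩ := (Metric.tendsto_atTop.1 hL) (ε/2) (by linarith)
    refine ⟨M, fun i hi => ?_⟩
    have hdi : d i ≤ ε/2 := by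
      apply ciSup_le
      intro m
      have := hM (m + i) (by omega)
      rw [Real.dist_eq] at this
      linarith
    rw [Real.dist_eq, sub_zero, abs_of_nonneg (hd_nonneg i)]
    linarith
  refine ⟨fun j => 2 * d (j - 1), fun j => by show (0:ℝ) ≤ 2 * d (j-1); have := hd_nonneg (j-1); linarith, ?_, ?_⟩
  · have : Tendsto (fun j : ℕ => d (j - 1)) atTop (nhds 0) :=
      hd_to.comp (tendsto_sub_atTop_nat 1)
    simpa using this.const_mul 2
  · intro n hn
    have hy : ∀ j, 1 ≤ j → indicatorY x n (fun j => 2 * d (j - 1)) j = 1 := by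
      intro j hj
      rw [indicatorY, if_pos]
      have hmono : blockEnd n (j - 1) ≤ blockEnd n j := blockEnd_mono n (by omega)
      have hS : blockSum x n j = T (blockEnd n j) - T (blockEnd n (j - 1)) := by
        rw [blockSum, ← sub_partial x hmono]
      rw [hS]
      have h1 : |T (blockEnd n j) - L| ≤ d (j - 1) :=
        hd_le _ _ (le_trans (by omega) (le_blockEnd n hn j))
      have h2 : |T (blockEnd n (j - 1)) - L| ≤ d (j - 1) :=
        hd_le _ _ (le_blockEnd n hn (j - 1))
      calc |T (blockEnd n j) - T (blockEnd n (j - 1))|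
          = |(T (blockEnd n j) - L) - (T (blockEnd n (j - 1)) - L)| := by ring_nf
        _ ≤ |T (blockEnd n j) - L| + |T (blockEnd n (j - 1)) - L| := abs_sub _ _
        _ ≤ 2 * d (j - 1) := by linarith
    have hpm : ∀ k : ℕ, 1 ≤ k →
        postMean x n (fun j => 2 * d (j - 1)) k =
          1 - (∑ j ∈ Finset.Icc 1 k, (1 : ℝ) / (j : ℝ) ^ 2) /
            ((k : ℝ) + 2 * ∑ j ∈ Finset.Icc 1 k, (1 : ℝ) / (j : ℝ) ^ 2) := by
      intro k hk
      have hsumy : ∑ j ∈ Finset.Icc 1 k, indicatorY x n (fun j => 2 * d (j - 1)) j = k := by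
        rw [Finset.sum_congr rfl (fun j hj => hy j (Finset.mem_Icc.1 hj).1)]
        simp
      have hA := basel_nonneg k
      have hkpos : (0:ℝ) < k := by exact_mod_cast hk
      have hden : (0:ℝ) < (k : ℝ) + 2 * ∑ j ∈ Finset.Icc 1 k, (1 : ℝ) / (j : ℝ) ^ 2 := by
        linarith
      rw [postMean, hsumy]
      field_simp
      ring
    have hg : Tendsto (fun k : ℕ => (∑ j ∈ Finset.Icc 1 k, (1 : ℝ) / (j : ℝ) ^ 2) /
        ((k : ℝ) + 2 * ∑ j ∈ Finset.Icc 1 k, (1 : ℝ) / (j : ℝ) ^ 2)) atTop (nhds 0) := by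
      apply squeeze_zero'
      · filter_upwards with k
        have hA := basel_nonneg k
        have hk0 : (0:ℝ) ≤ (k:ℝ) := Nat.cast_nonneg k
        exact div_nonneg hA (by linarith)
      · filter_upwards [eventually_ge_atTop 1] with k hk
        have hkpos : (0:ℝ) < k := by exact_mod_cast hk
        have hA := basel_nonneg k
        have hA2 := basel_le_two k
        exact div_le_div₀ (by norm_num) hA2 hkpos (by linarith)
      · exact tendsto_const_div_atTop_nhds_zero_nat 2
    have := (tendsto_const_nhds (x := (1:ℝ)) (f := atTop)).sub hg
    rw [sub_zero] at this
    apply this.congr'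
    filter_upwards [eventually_ge_atTop 1] with k hk
    exact (hpm k hk).symm


lemma reverse_dir (x : ℕ → ℝ) (c : ℕ → ℝ) (hc0 : ∀ j, 0 ≤ c j)
    (hcto : Tendsto c atTop (nhds 0))
    (hpost : ∀ n : ℕ → ℕ, (∀ j, 1 ≤ n j) →
      Tendsto (fun k => postMean x n c k) atTop (nhds 1)) :
    ∃ L : ℝ, Tendsto (fun m => ∑ i ∈ Finset.Icc 1 m, x i) atTop (nhds L) := by
  set T : ℕ → ℝ := fun m => ∑ i ∈ Finset.Icc 1 m, x i with hTdef
  apply cauchySeq_tendsto_of_complete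
  by_contra hC
  rw [Metric.cauchySeq_iff] at hC
  push_neg at hC
  obtain ⟨ε, hε, hC⟩ := hC
  -- repackage: for every N there is a pair N < p < q with ε ≤ |T q - T p|
  have hpair : ∀ N : ℕ, ∃ pq : ℕ × ℕ, N < pq.1 ∧ pq.1 < pq.2 ∧ ε ≤ |T pq.2 - T pq.1| := by
    intro N
    obtain ⟨m, hm, p, hp, hd⟩ := hC (N + 1)
    rw [Real.dist_eq] at hd
    rcases lt_trichotomy m p with h | h | h
    · exact ⟨(m, p), by omega, h, by rw [abs_sub_comm]; exact hd⟩
    · exfalso; rw [h] at hd; simp at hd; linarith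
    · exact ⟨(p, m), by omega, h, hd⟩
  choose F hF1 hF2 hF3 using hpair
  -- recursively generated pairs
  set f : ℕ → ℕ × ℕ := fun i => Nat.rec (F 0) (fun _ prev => F prev.2) i with hfdef
  set e : ℕ → ℕ := fun i => Nat.rec 0 (fun i' _ => (f i').2) i with hedef
  have hfe : ∀ i, f i = F (e i) := by
    intro i; cases i <;> rfl
  have he0 : e 0 = 0 := rfl
  have hes : ∀ i, e (i + 1) = (f i).2 := fun i => rfl
  have hlt1 : ∀ i, e i < (f i).1 := fun i => by rw [hfe]; exact hF1 (e i)
  have hlt2 : ∀ i, (f i).1 < (f i).2 := fun i => by rw [hfe]; exact hF2 (e i)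
  have hεi : ∀ i, ε ≤ |T (f i).2 - T (f i).1| := fun i => by rw [hfe]; exact hF3 (e i)
  -- block sizes
  set n : ℕ → ℕ := fun j =>
    if j = 0 then 1
    else if j % 2 = 1 then (f (j / 2)).1 - e (j / 2)
    else (f (j / 2 - 1)).2 - (f (j / 2 - 1)).1 with hndef
  have hn1 : ∀ i, n (2 * i + 1) = (f i).1 - e i := by
    intro i; simp only [hndef]
    have h1 : 2 * i + 1 ≠ 0 := by omega
    have h2 : (2 * i + 1) % 2 = 1 := by omega
    have h3 : (2 * i + 1) / 2 = i := by omega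
    rw [if_neg h1, if_pos h2, h3]
  have hn2 : ∀ i, n (2 * i + 2) = (f i).2 - (f i).1 := by
    intro i; simp only [hndef]
    have h1 : 2 * i + 2 ≠ 0 := by omega
    have h2 : (2 * i + 2) % 2 = 0 := by omega
    have h3 : (2 * i + 2) / 2 - 1 = i := by omega
    rw [if_neg h1, if_neg (by omega), h3]
  have hnpos : ∀ j, 1 ≤ n j := by
    intro j
    rcases Nat.eq_zero_or_pos j with h | h
    · simp [hndef, h]
    rcases Nat.even_or_odd j with ⟨i, hi⟩ | ⟨i, hi⟩
    · have hj : j = 2 * (i - 1) + 2 := by omega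
      rw [hj, hn2]
      have := hlt2 (i - 1); omega
    · have hj : j = 2 * i + 1 := by omega
      rw [hj, hn1]
      have := hlt1 i; omega
  -- block endpoints
  have hbe : ∀ i, blockEnd n (2 * i) = e i ∧ blockEnd n (2 * i + 1) = (f i).1 := by
    intro i
    induction i with
    | zero =>
      constructor
      · simpa [he0] using blockEnd_zero n
      · have := blockEnd_succ n 0
        rw [blockEnd_zero n] at this
        simp only [Nat.mul_zero, Nat.zero_add] at *
        rw [this]
        have := hlt1 0
        have h0 : n 1 = (f 0).1 - e 0 := by simpa using hn1 0
        rw [h0, he0] at *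
        omega
    | succ m ih =>
      have h1 : blockEnd n (2 * m + 2) = e (m + 1) := by
        have h := blockEnd_succ n (2 * m + 1)
        rw [ih.2, hn2 m] at h
        have hlt := hlt2 m
        show blockEnd n (2 * m + 1 + 1) = e (m + 1)
        rw [h, hes m]
        omega
      constructor
      · rw [show 2 * (m + 1) = 2 * m + 2 by ring]; exact h1
      · have := blockEnd_succ n (2 * m + 2)
        rw [h1] at this
        rw [show 2 * (m + 1) + 1 = 2 * m + 2 + 1 by ring, this]
        have h2 : n (2 * m + 3) = (f (m + 1)).1 - e (m + 1) := by
          have := hn1 (m + 1); rw [show 2 * (m+1) + 1 = 2*m+3 by ring] at this; exact this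
        rw [h2]
        have := hlt1 (m + 1)
        omega
  -- bad blocks have big sums
  have hbad : ∀ i, ε ≤ |blockSum x n (2 * i + 2)| := by
    intro i
    have h1 : blockEnd n (2 * i + 2 - 1) = (f i).1 := by
      simpa using (hbe i).2
    have h2 : blockEnd n (2 * i + 2) = e (i + 1) := by
      have := (hbe (i + 1)).1
      rw [show 2 * (i + 1) = 2 * i + 2 by ring] at this
      exact this
    have hS : blockSum x n (2 * i + 2) = T (f i).2 - T (f i).1 := by
      rw [blockSum, h1, h2, hes i, ← sub_partial x (le_of_lt (hlt2 i))]
    rw [hS]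
    exact hεi i
  -- choose J with c j < ε beyond J
  obtain ⟨J, hJ⟩ := eventually_atTop.1 (hcto.eventually (gt_mem_nhds hε))
  set J' : ℕ := max J 2 with hJ'def
  have hy0 : ∀ j, Even j → J' ≤ j → indicatorY x n c j = 0 := by
    intro j hev hj
    obtain ⟨i0, hi0⟩ := hev
    have hj2 : j = 2 * (j / 2 - 1) + 2 := by omega
    rw [indicatorY, if_neg]
    have hb := hbad (j / 2 - 1)
    rw [← hj2] at hb
    have hc := hJ j (le_trans (le_max_left _ _) hj)
    intro h
    linarith
  have hy01 : ∀ j, indicatorY x n c j ≤ 1 := by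
    intro j; rw [indicatorY]; split <;> norm_num
  have hBle : ∀ k : ℕ, ∑ j ∈ Finset.Icc 1 k, indicatorY x n c j ≤
      (((k + 1) / 2 + J' : ℕ) : ℝ) := by
    intro k
    rw [← Finset.sum_filter_add_sum_filter_not (Finset.Icc 1 k)
      (fun j => Even j ∧ J' ≤ j)]
    have h1 : ∑ j ∈ (Finset.Icc 1 k).filter (fun j => Even j ∧ J' ≤ j),
        indicatorY x n c j = 0 :=
      Finset.sum_eq_zero fun j hj => by
        have := (Finset.mem_filter.1 hj).2
        exact hy0 j this.1 this.2
    rw [h1, zero_add]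
    calc ∑ j ∈ (Finset.Icc 1 k).filter (fun j => ¬(Even j ∧ J' ≤ j)), indicatorY x n c j
        ≤ ∑ j ∈ (Finset.Icc 1 k).filter (fun j => ¬(Even j ∧ J' ≤ j)), (1 : ℝ) :=
          Finset.sum_le_sum fun j _ => hy01 j
      _ = (((Finset.Icc 1 k).filter (fun j => ¬(Even j ∧ J' ≤ j))).card : ℝ) := by simp
      _ ≤ (((k + 1) / 2 + J' : ℕ) : ℝ) := by
          rw [Nat.cast_le]
          calc ((Finset.Icc 1 k).filter (fun j => ¬(Even j ∧ J' ≤ j))).card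
              ≤ ((Finset.Icc 1 k).filter (fun j => ¬ Even j) ∪ Finset.Icc 1 J').card := by
                apply Finset.card_le_card
                intro j hj
                simp only [Finset.mem_filter, Finset.mem_Icc] at hj
                simp only [Finset.mem_union, Finset.mem_filter, Finset.mem_Icc]
                by_cases he : Even j
                · right
                  have h2 : ¬ J' ≤ j := fun h => hj.2 ⟨he, h⟩
                  omega
                · exact Or.inl ⟨hj.1, he⟩
            _ ≤ ((Finset.Icc 1 k).filter (fun j => ¬ Even j)).card + (Finset.Icc 1 J').card :=
                Finset.card_union_le _ _
            _ ≤ (k + 1) / 2 + J' := by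
                have := odd_card k
                rw [Nat.card_Icc]
                omega
  -- contradiction with the posterior mean tending to 1
  obtain ⟨K, hK⟩ := eventually_atTop.1
    ((hpost n hnpos).eventually (lt_mem_nhds (show (7:ℝ)/8 < 1 by norm_num)))
  set k : ℕ := max K (8 * J' + 8) with hkdef
  have hk8 : 8 * J' + 8 ≤ k := le_max_right _ _
  have hpm := hK k (le_max_left _ _)
  rw [postMean] at hpm
  set A : ℝ := ∑ j ∈ Finset.Icc 1 k, (1 : ℝ) / (j : ℝ) ^ 2 with hAdef
  have hA0 : 0 ≤ A := basel_nonneg k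
  have hkR : (8 : ℝ) * J' + 8 ≤ (k : ℝ) := by exact_mod_cast Nat.cast_le.2 hk8
  have hJ'0 : (0:ℝ) ≤ (J' : ℝ) := Nat.cast_nonneg _
  have hden : (0:ℝ) < (k : ℝ) + 2 * A := by linarith
  rw [lt_div_iff₀ hden] at hpm
  have hB := hBle k
  have hhalf : (((k + 1) / 2 + J' : ℕ) : ℝ) ≤ ((k : ℝ) + 1) / 2 + J' := by
    push_cast
    have := Nat.cast_div_le (α := ℝ) (m := k + 1) (n := 2)
    push_cast at this
    linarith
  linarith


/-- Bayesian characterization of convergence (Theorem 1, path-wise content):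
the series `∑_{i=1}^∞ x i` converges to a finite limit iff there is a nonnegative
sequence `c j → 0` such that for every choice of block sizes `n j ≥ 1`, the
posterior means tend to `1`. -/
theorem bayesian_characterization_of_convergence (x : ℕ → ℝ) :
    (∃ L : ℝ, Tendsto (fun m => ∑ i ∈ Finset.Icc 1 m, x i) atTop (nhds L)) ↔
      ∃ c : ℕ → ℝ, (∀ j, 0 ≤ c j) ∧ Tendsto c atTop (nhds 0) ∧
        ∀ n : ℕ → ℕ, (∀ j, 1 ≤ n j) →
          Tendsto (fun k => postMean x n c k) atTop (nhds 1) := by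
  constructor
  · rintro ⟨L, hL⟩
    exact forward_dir x L hL
  · rintro ⟨c, hc0, hcto, hpost⟩
    exact reverse_dir x c hc0 hcto hpost
end

section
/- Let (X_i)_{i≥1} be independent and identically distributed real random variables with P(X_i = 1) = P(X_i = −1) = 1/2 (Rademacher random variables), and let p ≤ 1/2 be a real number. Then almost surely the random Dirichlet series Σ_{i=1}^∞ X_i · i^{−p} does not converge to a finite limit (its partial sums fail to converge). -/
open Filter Finset MeasureTheory ProbabilityTheory

lemma aux_measSet_exists_tendsto {Ω : Type*} (m' : MeasurableSpace Ω) (f : ℕ → Ω → ℝ)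
    (hf : ∀ i, Measurable[m'] (f i)) :
    MeasurableSet[m'] {ω | ∃ c, Tendsto (fun n => f n ω) atTop (nhds c)} := by
  letI := m'
  exact measurableSet_exists_tendsto hf

lemma rademacher_cos_sin {Ω : Type*} [MeasurableSpace Ω] (P : Measure Ω)
    [IsProbabilityMeasure P]
    (X : ℕ → Ω → ℝ) (hmeas : ∀ i, Measurable (X i))
    (hindep : iIndepFun X P)
    (hpm : ∀ᵐ ω ∂P, ∀ i, X i ω = 1 ∨ X i ω = -1)
    (hE : ∀ k, ∫ ω, X k ω ∂P = 0) (a : ℕ → ℝ) (F : Finset ℕ) :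
    (∫ ω, Real.cos (∑ i ∈ F, X i ω * a i) ∂P = ∏ i ∈ F, Real.cos (a i)) ∧
    (∫ ω, Real.sin (∑ i ∈ F, X i ω * a i) ∂P = 0) := by
  classical
  have hint : ∀ (f : Ω → ℝ), Measurable f → (∀ᵐ ω ∂P, |f ω| ≤ 1) → Integrable f P :=
    fun f hf hb => (integrable_const 1).mono' hf.aestronglyMeasurable (by simpa using hb)
  induction F using Finset.cons_induction with
  | empty => simp
  | cons k s hk ih =>
    set S : Ω → ℝ := fun ω => ∑ i ∈ s, X i ω * a i with hSdef
    set Y : Ω → ℝ := fun ω => X k ω * a k with hYdef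
    have hSmeas : Measurable S := Finset.measurable_sum _ fun i _ => (hmeas i).mul_const _
    have hYmeas : Measurable Y := (hmeas k).mul_const _
    have hg : iIndepFun (fun i ω => X i ω * a i) P :=
      hindep.comp (fun i x => x * a i) (fun i => measurable_mul_const (a i))
    have hsum_eq : (∑ j ∈ s, fun ω => X j ω * a j) = S := by
      funext ω; simp [hSdef]
    have hSY : IndepFun S Y P := by
      have h1 := hg.indepFun_finsetSum_of_notMem
        (fun i => (hmeas i).mul_const _) hk
      rwa [hsum_eq] at h1
    -- expectations of cos Y and sin Y
    have hEcosY : ∫ ω, Real.cos (Y ω) ∂P = Real.cos (a k) := by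
      have h : (fun ω => Real.cos (Y ω)) =ᵐ[P] fun _ => Real.cos (a k) := by
        filter_upwards [hpm] with ω hω
        rcases hω k with h | h <;> simp [hYdef, h]
      rw [integral_congr_ae h]; simp
    have hEsinY : ∫ ω, Real.sin (Y ω) ∂P = 0 := by
      have h : (fun ω => Real.sin (Y ω)) =ᵐ[P] fun ω => Real.sin (a k) * X k ω := by
        filter_upwards [hpm] with ω hω
        rcases hω k with h | h <;> simp [hYdef, h]
      rw [integral_congr_ae h, integral_const_mul, hE k, mul_zero]
    -- integrability
    have habs1 : ∀ᵐ ω ∂P, |X k ω| ≤ 1 := by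
      filter_upwards [hpm] with ω hω
      rcases hω k with h | h <;> simp [h]
    have hiCC : Integrable (fun ω => Real.cos (Y ω) * Real.cos (S ω)) P := by
      refine hint _ ((Real.measurable_cos.comp hYmeas).mul
        (Real.measurable_cos.comp hSmeas)) (Filter.Eventually.of_forall fun ω => ?_)
      rw [abs_mul]
      exact mul_le_one₀ (Real.abs_cos_le_one _) (abs_nonneg _) (Real.abs_cos_le_one _)
    have hiSS : Integrable (fun ω => Real.sin (Y ω) * Real.sin (S ω)) P := by
      refine hint _ ((Real.measurable_sin.comp hYmeas).mul
        (Real.measurable_sin.comp hSmeas)) (Filter.Eventually.of_forall fun ω => ?_)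
      rw [abs_mul]
      exact mul_le_one₀ (Real.abs_sin_le_one _) (abs_nonneg _) (Real.abs_sin_le_one _)
    have hiSC : Integrable (fun ω => Real.sin (Y ω) * Real.cos (S ω)) P := by
      refine hint _ ((Real.measurable_sin.comp hYmeas).mul
        (Real.measurable_cos.comp hSmeas)) (Filter.Eventually.of_forall fun ω => ?_)
      rw [abs_mul]
      exact mul_le_one₀ (Real.abs_sin_le_one _) (abs_nonneg _) (Real.abs_cos_le_one _)
    have hiCS : Integrable (fun ω => Real.cos (Y ω) * Real.sin (S ω)) P := by
      refine hint _ ((Real.measurable_cos.comp hYmeas).mul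
        (Real.measurable_sin.comp hSmeas)) (Filter.Eventually.of_forall fun ω => ?_)
      rw [abs_mul]
      exact mul_le_one₀ (Real.abs_cos_le_one _) (abs_nonneg _) (Real.abs_sin_le_one _)
    -- products of independent factors
    have hCC : ∫ ω, Real.cos (Y ω) * Real.cos (S ω) ∂P
        = (∫ ω, Real.cos (Y ω) ∂P) * (∫ ω, Real.cos (S ω) ∂P) := by
      have := (hSY.symm.comp Real.measurable_cos Real.measurable_cos).integral_mul_eq_mul_integral
        ((Real.measurable_cos.comp hYmeas).aestronglyMeasurable)
        ((Real.measurable_cos.comp hSmeas).aestronglyMeasurable)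
      simpa [Function.comp] using this
    have hSS : ∫ ω, Real.sin (Y ω) * Real.sin (S ω) ∂P
        = (∫ ω, Real.sin (Y ω) ∂P) * (∫ ω, Real.sin (S ω) ∂P) := by
      have := (hSY.symm.comp Real.measurable_sin Real.measurable_sin).integral_mul_eq_mul_integral
        ((Real.measurable_sin.comp hYmeas).aestronglyMeasurable)
        ((Real.measurable_sin.comp hSmeas).aestronglyMeasurable)
      simpa [Function.comp] using this
    have hSC : ∫ ω, Real.sin (Y ω) * Real.cos (S ω) ∂P
        = (∫ ω, Real.sin (Y ω) ∂P) * (∫ ω, Real.cos (S ω) ∂P) := by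
      have := (hSY.symm.comp Real.measurable_sin Real.measurable_cos).integral_mul_eq_mul_integral
        ((Real.measurable_sin.comp hYmeas).aestronglyMeasurable)
        ((Real.measurable_cos.comp hSmeas).aestronglyMeasurable)
      simpa [Function.comp] using this
    have hCS : ∫ ω, Real.cos (Y ω) * Real.sin (S ω) ∂P
        = (∫ ω, Real.cos (Y ω) ∂P) * (∫ ω, Real.sin (S ω) ∂P) := by
      have := (hSY.symm.comp Real.measurable_cos Real.measurable_sin).integral_mul_eq_mul_integral
        ((Real.measurable_cos.comp hYmeas).aestronglyMeasurable)
        ((Real.measurable_sin.comp hSmeas).aestronglyMeasurable)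
      simpa [Function.comp] using this
    have hsum_cons : ∀ ω, ∑ i ∈ Finset.cons k s hk, X i ω * a i = Y ω + S ω := by
      intro ω; rw [Finset.sum_cons]
    constructor
    · have h1 : ∫ ω, Real.cos (∑ i ∈ Finset.cons k s hk, X i ω * a i) ∂P
          = ∫ ω, (Real.cos (Y ω) * Real.cos (S ω) - Real.sin (Y ω) * Real.sin (S ω)) ∂P := by
        apply integral_congr_ae
        filter_upwards with ω
        rw [hsum_cons ω, Real.cos_add]
      rw [h1, integral_sub hiCC hiSS, hCC, hSS, hEcosY, hEsinY, ih.1, Finset.prod_cons]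
      ring
    · have h1 : ∫ ω, Real.sin (∑ i ∈ Finset.cons k s hk, X i ω * a i) ∂P
          = ∫ ω, (Real.sin (Y ω) * Real.cos (S ω) + Real.cos (Y ω) * Real.sin (S ω)) ∂P := by
        apply integral_congr_ae
        filter_upwards with ω
        rw [hsum_cons ω, Real.sin_add]
      rw [h1, integral_add hiSC hiCS, hSC, hCS, hEsinY, ih.2]
      ring

/-- Almost sure divergence of the random Dirichlet series (Example 6):
for i.i.d. Rademacher random variables `X i` (`i ≥ 1`, here indexed by `i + 1`,
with `P(X i = 1) = P(X i = -1) = 1/2`) and `p ≤ 1/2`, almost surely the series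
`∑_{i=1}^∞ X i · i^{-p}` does not converge to a finite limit. -/
theorem random_dirichlet_series_diverges
    {Ω : Type*} [MeasurableSpace Ω] (P : Measure Ω) [IsProbabilityMeasure P]
    (X : ℕ → Ω → ℝ) (hmeas : ∀ i, Measurable (X i))
    (hindep : iIndepFun X P)
    (hlaw : ∀ i, P {ω | X i ω = 1} = 1 / 2 ∧ P {ω | X i ω = -1} = 1 / 2)
    (p : ℝ) (hp : p ≤ 1 / 2) :
    ∀ᵐ ω ∂P, ¬ ∃ L : ℝ,
      Tendsto (fun m => ∑ i ∈ Finset.range m, X i ω * ((i : ℝ) + 1) ^ (-p))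
        atTop (nhds L) := by
  classical
  set a : ℕ → ℝ := fun i => ((i : ℝ) + 1) ^ (-p) with ha
  -- the variables are a.s. ±1
  have hpm : ∀ᵐ ω ∂P, ∀ i, X i ω = 1 ∨ X i ω = -1 := by
    rw [ae_all_iff]
    intro i
    obtain ⟨h1, h2⟩ := hlaw i
    have hA : MeasurableSet {ω | X i ω = 1} := measurableSet_eq_fun (hmeas i) measurable_const
    have hB : MeasurableSet {ω | X i ω = -1} := measurableSet_eq_fun (hmeas i) measurable_const
    have hdisj : Disjoint {ω | X i ω = 1} {ω | X i ω = -1} := by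
      rw [Set.disjoint_left]
      intro ω hω1 hω2
      simp only [Set.mem_setOf_eq] at hω1 hω2
      rw [hω1] at hω2; norm_num at hω2
    have hunion : P ({ω | X i ω = 1} ∪ {ω | X i ω = -1}) = 1 := by
      rw [measure_union hdisj hB, h1, h2]
      rw [ENNReal.div_add_div_same, one_add_one_eq_two]
      exact ENNReal.div_self two_ne_zero ENNReal.ofNat_ne_top
    have hcompl : P ({ω | X i ω = 1} ∪ {ω | X i ω = -1})ᶜ = 0 :=
      (prob_compl_eq_zero_iff (hA.union hB)).2 hunion
    rw [ae_iff]
    convert hcompl using 2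
    ext ω; simp
  rcases le_or_gt p 0 with hp0 | hp0
  · -- case p ≤ 0 : terms do not tend to 0
    filter_upwards [hpm] with ω hω
    rintro ⟨L, hL⟩
    have hterm : Tendsto (fun m => X m ω * a m) atTop (nhds 0) := by
      have h2 := (hL.comp (tendsto_add_atTop_nat 1)).sub hL
      rw [sub_self] at h2
      refine h2.congr fun m => ?_
      simp [Function.comp, Finset.sum_range_succ, ha]
    have h1 : ∀ m, (1 : ℝ) ≤ |X m ω * a m| := by
      intro m
      have hx1 : (1 : ℝ) ≤ (m : ℝ) + 1 := by
        have := Nat.cast_nonneg (α := ℝ) m; linarith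
      have h2 : (1 : ℝ) ≤ a m := Real.one_le_rpow hx1 (by linarith)
      have h3 : |X m ω| = 1 := by rcases hω m with h | h <;> simp [h]
      rw [abs_mul, h3, one_mul, abs_of_nonneg (by linarith : (0:ℝ) ≤ a m)]
      exact h2
    have h2 := (Metric.tendsto_nhds.mp hterm) 1 one_pos
    rw [eventually_atTop] at h2
    obtain ⟨m, hm⟩ := h2
    have := hm m le_rfl
    rw [Real.dist_eq, sub_zero] at this
    linarith [h1 m]
  · -- case 0 < p ≤ 1/2
    set C : Set Ω := {ω | ∃ L : ℝ,
      Tendsto (fun m => ∑ i ∈ Finset.range m, X i ω * a i) atTop (nhds L)} with hCdef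
    suffices hPC : P C = 0 by
      rw [ae_iff]
      convert hPC using 2
      ext ω
      simp [hCdef, ha]
    set ms : ℕ → MeasurableSpace Ω := fun i =>
      MeasurableSpace.comap (X i) inferInstance with hms
    have h_le : ∀ i, ms i ≤ ‹MeasurableSpace Ω› := fun i => (hmeas i).comap_le
    have hCtail : MeasurableSet[Filter.limsup ms atTop] C := by
      rw [Filter.limsup_eq_iInf_iSup_of_nat, MeasurableSpace.measurableSet_iInf]
      intro n
      have hXm : ∀ i, n ≤ i → Measurable[⨆ i ≥ n, ms i] (X i) := by
        intro i hi
        have hm1 : Measurable[ms i] (X i) := Measurable.of_comap_le le_rfl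
        exact hm1.mono (le_iSup₂ (f := fun i (_ : i ≥ n) => ms i) i hi) le_rfl
      have hT : ∀ m, Measurable[⨆ i ≥ n, ms i]
          (fun ω => ∑ i ∈ Finset.Ico n m, X i ω * a i) := by
        intro m
        refine Finset.measurable_sum _ fun i hi => ?_
        exact (hXm i (Finset.mem_Ico.1 hi).1).mul_const _
      have hset : C = {ω | ∃ c,
          Tendsto (fun m => ∑ i ∈ Finset.Ico n m, X i ω * a i) atTop (nhds c)} := by
        ext ω
        constructor
        · rintro ⟨L, hL⟩
          refine ⟨L - ∑ i ∈ Finset.range n, X i ω * a i, ?_⟩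
          refine ((hL.sub_const _)).congr' ?_
          filter_upwards [eventually_ge_atTop n] with m hm
          rw [Finset.sum_Ico_eq_sub _ hm]
        · rintro ⟨c, hc⟩
          refine ⟨c + ∑ i ∈ Finset.range n, X i ω * a i, ?_⟩
          refine ((hc.add_const _)).congr' ?_
          filter_upwards [eventually_ge_atTop n] with m hm
          rw [Finset.sum_Ico_eq_sub _ hm]
          ring
      rw [hset]
      exact aux_measSet_exists_tendsto _ _ hT
    have h01 : P C = 0 ∨ P C = 1 :=
      measure_zero_or_one_of_measurableSet_limsup_atTop h_le hindep hCtail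
    rcases h01 with h0 | h1
    · exact h0
    exfalso
    have hCmeas : MeasurableSet C := by
      have hle2 : Filter.limsup ms atTop ≤ ‹MeasurableSpace Ω› := by
        rw [Filter.limsup_eq_iInf_iSup_of_nat]
        exact le_trans (iInf_le _ 0) (iSup₂_le fun i _ => h_le i)
      exact hle2 _ hCtail
    have haeC : ∀ᵐ ω ∂P, ω ∈ C := by
      rw [ae_iff]
      have heq : {ω | ¬ ω ∈ C} = Cᶜ := rfl
      rw [heq, measure_compl hCmeas (measure_ne_top _ _), h1, measure_univ, tsub_self]
    -- expectation of X k is 0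
    have hE : ∀ k, ∫ ω, X k ω ∂P = 0 := by
      intro k
      obtain ⟨h1', h2'⟩ := hlaw k
      have hA : MeasurableSet {ω | X k ω = 1} := measurableSet_eq_fun (hmeas k) measurable_const
      have hB : MeasurableSet {ω | X k ω = -1} := measurableSet_eq_fun (hmeas k) measurable_const
      have heq : X k =ᵐ[P] fun ω =>
          Set.indicator {ω | X k ω = 1} (fun _ => (1:ℝ)) ω
            + Set.indicator {ω | X k ω = -1} (fun _ => (-1:ℝ)) ω := by
        filter_upwards [hpm] with ω hω
        rcases hω k with h | h <;>
          · simp only [Set.indicator_apply, Set.mem_setOf_eq, h]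
            norm_num
      rw [integral_congr_ae heq,
        integral_add ((integrable_const _).indicator hA) ((integrable_const _).indicator hB),
        integral_indicator_const _ hA, integral_indicator_const _ hB, measureReal_def, measureReal_def, h1', h2']
      norm_num
    -- almost sure convergence of blocks to 0, and of their cosines to 1
    have hDto : ∀ᵐ ω ∂P, Tendsto
        (fun n => Real.cos (∑ i ∈ Finset.Ico n (2*n), X i ω * a i)) atTop (nhds 1) := by
      filter_upwards [haeC] with ω hω
      obtain ⟨L, hL⟩ := hω
      have hmul : Tendsto (fun n : ℕ => 2*n) atTop atTop :=
        tendsto_atTop_mono (fun n => by simp only [id_eq]; omega) tendsto_id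
      have h2n : Tendsto (fun n => ∑ i ∈ Finset.range (2*n), X i ω * a i)
          atTop (nhds L) := hL.comp hmul
      have hD : Tendsto (fun n => ∑ i ∈ Finset.Ico n (2*n), X i ω * a i)
          atTop (nhds 0) := by
        have h3 := h2n.sub hL
        rw [sub_self] at h3
        refine h3.congr fun n => ?_
        exact (Finset.sum_Ico_eq_sub _ (by omega)).symm
      have := (Real.continuous_cos.tendsto 0).comp hD
      simpa [Function.comp_def] using this
    -- bounded convergence
    have hcos_int_tendsto : Tendsto
        (fun n => ∫ ω, Real.cos (∑ i ∈ Finset.Ico n (2*n), X i ω * a i) ∂P)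
        atTop (nhds 1) := by
      have h := tendsto_integral_of_dominated_convergence (μ := P)
        (F := fun n ω => Real.cos (∑ i ∈ Finset.Ico n (2*n), X i ω * a i))
        (f := fun _ => (1:ℝ)) (bound := fun _ => (1:ℝ))
        (fun n => (Real.measurable_cos.comp
          (Finset.measurable_sum _ fun i _ => (hmeas i).mul_const _)).aestronglyMeasurable)
        (integrable_const 1)
        (fun n => Filter.Eventually.of_forall fun ω => by
          simpa using Real.abs_cos_le_one _)
        hDto
      simpa using h
    -- the integral is a product of cosines, bounded away from 1
    have hkey := fun F => rademacher_cos_sin P X hmeas hindep hpm hE a F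
    have hbound : ∀ n : ℕ, 1 ≤ n →
        ∫ ω, Real.cos (∑ i ∈ Finset.Ico n (2*n), X i ω * a i) ∂P
          ≤ Real.exp (-(1/Real.pi^2)) := by
      intro n hn
      rw [(hkey _).1]
      have hpi := Real.pi_gt_three
      have hpisq : (0:ℝ) < Real.pi ^ 2 := by positivity
      have ha_pos : ∀ i : ℕ, 0 < a i := fun i =>
        Real.rpow_pos_of_pos (by positivity) _
      have ha_le1 : ∀ i : ℕ, a i ≤ 1 := fun i =>
        Real.rpow_le_one_of_one_le_of_nonpos
          (by have := Nat.cast_nonneg (α := ℝ) i; linarith) (by linarith)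
      have hsum : (1/2 : ℝ) ≤ ∑ i ∈ Finset.Ico n (2*n), (a i)^2 := by
        have hlb : ∀ i ∈ Finset.Ico n (2*n), (1/(2*(n:ℝ))) ≤ (a i)^2 := by
          intro i hi
          obtain ⟨hi1, hi2⟩ := Finset.mem_Ico.1 hi
          have hipos : (0:ℝ) < (i:ℝ) + 1 := by positivity
          have hn1 : (1:ℝ) ≤ (n:ℝ) := by exact_mod_cast hn
          have e1 : (a i)^2 = ((i:ℝ) + 1) ^ (-(2*p)) := by
            rw [sq, ha]
            rw [← Real.rpow_add hipos]
            congr 1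
            ring
          have hcast : (i:ℝ) + 1 ≤ 2*(n:ℝ) := by
            have : i + 1 ≤ 2*n := by omega
            exact_mod_cast this
          have e2 : (2*(n:ℝ)) ^ (-(2*p)) ≤ ((i:ℝ) + 1) ^ (-(2*p)) :=
            Real.rpow_le_rpow_of_nonpos hipos hcast (by linarith)
          have e3 : (2*(n:ℝ)) ^ (-1 : ℝ) ≤ (2*(n:ℝ)) ^ (-(2*p)) :=
            Real.rpow_le_rpow_of_exponent_le (by linarith) (by linarith)
          have e4 : (2*(n:ℝ)) ^ (-1 : ℝ) = 1/(2*(n:ℝ)) := by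
            rw [Real.rpow_neg_one, one_div]
          rw [e1]
          rw [e4] at e3
          linarith
        calc (1/2 : ℝ) = (Finset.Ico n (2*n)).card • (1/(2*(n:ℝ))) := by
              rw [Nat.card_Ico, show 2*n - n = n from by omega, nsmul_eq_mul]
              have hn0 : (n:ℝ) ≠ 0 := by positivity
              field_simp
          _ ≤ ∑ i ∈ Finset.Ico n (2*n), (a i)^2 :=
              Finset.card_nsmul_le_sum _ _ _ hlb
      calc ∏ i ∈ Finset.Ico n (2*n), Real.cos (a i)
          ≤ ∏ i ∈ Finset.Ico n (2*n), Real.exp (-(2/Real.pi^2 * (a i)^2)) := by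
            refine Finset.prod_le_prod (fun i _ => ?_) (fun i _ => ?_)
            · refine Real.cos_nonneg_of_mem_Icc ⟨?_, ?_⟩
              · have := Real.pi_pos; linarith [(ha_pos i).le]
              · linarith [ha_le1 i]
            · have habs : |a i| ≤ Real.pi := by
                rw [abs_of_nonneg (ha_pos i).le]; linarith [ha_le1 i]
              have h1 := Real.cos_le_one_sub_mul_cos_sq habs
              have h2 := Real.add_one_le_exp (-(2/Real.pi^2 * (a i)^2))
              linarith
        _ = Real.exp (-(2/Real.pi^2 * ∑ i ∈ Finset.Ico n (2*n), (a i)^2)) := by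
            rw [← Real.exp_sum]
            congr 1
            rw [Finset.mul_sum, ← Finset.sum_neg_distrib]
        _ ≤ Real.exp (-(1/Real.pi^2)) := by
            apply Real.exp_le_exp.2
            have hc : (0:ℝ) ≤ 2/Real.pi^2 := by positivity
            have h5 := mul_le_mul_of_nonneg_left hsum hc
            have h6 : 2/Real.pi^2 * (1/2) = 1/Real.pi^2 := by ring
            linarith
    have hle1 : (1:ℝ) ≤ Real.exp (-(1/Real.pi^2)) := by
      refine le_of_tendsto hcos_int_tendsto ?_
      filter_upwards [eventually_ge_atTop 1] with n hn
      exact hbound n hn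
    have hlt1 : Real.exp (-(1/Real.pi^2)) < 1 := by
      rw [Real.exp_lt_one_iff]
      have h7 : (0:ℝ) < 1/Real.pi^2 := by have := Real.pi_pos; positivity
      linarith
    linarith
end
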